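/- arXiv:1507.05746 — 8 statements merged into one kernel-verified Lean document; each statement's English description precedes it below -/
import Mathlib

section
/- If π is an invariant distribution of the random walk (m̄_c(t)), then λ₁ + λ₂p₂·P(1,0) − μ₁c₁ = λ₁·P(0,1) + λ₂p₂·π(0,0), where P(1,0) = Σ_{m₁∈ℕ} π(m₁,0) and P(0,1) = Σ_{m₂∈ℕ} π(0,m₂). -/
/-- π is an invariant (stationary) probability distribution of the random walk (m̄_l(t)):
nonnegative, sums to 1, and satisfies the balance equations. -/
def IsInvariantDist (la1 la2 mu1 mu2 l1 l2 p1 p2 : ℝ) (π : ℕ × ℕ → ℝ) : Prop :=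
  (∀ m, 0 ≤ π m) ∧ (∑' m : ℕ × ℕ, π m = 1) ∧
  ∀ m1 m2 : ℕ,
    π (m1, m2) * (mu1 * l1 + mu2 * l2
        + (la1 + p2 * la2 * (if m2 = 0 then 1 else 0)) * (if 0 < m1 then 1 else 0)
        + (la2 + p1 * la1 * (if m1 = 0 then 1 else 0)) * (if 0 < m2 then 1 else 0))
    = mu1 * l1 * π (m1 - 1, m2) * (if 0 < m1 then 1 else 0)
      + mu2 * l2 * π (m1, m2 - 1) * (if 0 < m2 then 1 else 0)
      + (la1 + p2 * la2 * (if m2 = 0 then 1 else 0)) * π (m1 + 1, m2)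
      + (la2 + p1 * la1 * (if m1 = 0 then 1 else 0)) * π (m1, m2 + 1)

private lemma tsum_ind0' (f : ℕ → ℝ) :
    ∑' n, (if n = 0 then (1:ℝ) else 0) * f n = f 0 := by
  rw [tsum_eq_single 0] <;> intros <;> simp_all

private lemma summable_ind0' (f : ℕ → ℝ) :
    Summable fun n => (if n = 0 then (1:ℝ) else 0) * f n := by
  apply summable_of_ne_finset_zero (s := {0})
  intro n hn; simp at hn; simp [hn]

private lemma summable_shiftJ' (f : ℕ → ℝ) (hf : Summable f) :
    Summable (fun n : ℕ => f (n-1) * (if 0 < n then (1:ℝ) else 0)) := by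
  apply (summable_nat_add_iff 1).1
  simpa using hf

private lemma tsum_shiftJ' (f : ℕ → ℝ) (hf : Summable f) :
    ∑' n : ℕ, f (n-1) * (if 0 < n then (1:ℝ) else 0) = ∑' n, f n := by
  rw [Summable.tsum_eq_zero_add (summable_shiftJ' f hf)]
  simp

private lemma tsum_shift1' (f : ℕ → ℝ) (hf : Summable f) :
    ∑' n, f (n+1) = (∑' n, f n) - f 0 := by
  have := Summable.tsum_eq_zero_add hf; linarith

theorem stmt1 (la1 la2 mu1 mu2 c1 c2 p1 p2 : ℝ)
    (hla1 : 0 < la1) (hla2 : 0 < la2) (hmu1 : 0 < mu1) (hmu2 : 0 < mu2)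
    (hc1 : 0 < c1) (hc2 : 0 < c2)
    (hp1 : 0 ≤ p1) (hp1' : p1 ≤ 1) (hp2 : 0 ≤ p2) (hp2' : p2 ≤ 1)
    (π : ℕ × ℕ → ℝ) (hπ : IsInvariantDist la1 la2 mu1 mu2 c1 c2 p1 p2 π) :
    la1 + la2 * p2 * (∑' m1 : ℕ, π (m1, 0)) - mu1 * c1
      = la1 * (∑' m2 : ℕ, π (0, m2)) + la2 * p2 * π (0, 0) := by
  obtain ⟨hpos, htot, hbal⟩ := hπ
  have hsum : Summable π := by
    by_contra h
    rw [tsum_eq_zero_of_not_summable h] at htot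
    norm_num at htot
  have hrow : ∀ k : ℕ, Summable fun m2 => π (k, m2) :=
    fun k => hsum.comp_injective (fun a b h => by simpa using h)
  have hcol0 : Summable fun m1 => π (m1, 0) :=
    hsum.comp_injective (fun a b h => by simpa using h)
  -- helper tsum evaluations per row
  have eshift : ∀ k : ℕ, ∑' m2 : ℕ, π (k, m2 + 1)
      = (∑' m2 : ℕ, π (k, m2)) - π (k, 0) :=
    fun k => tsum_shift1' (fun m2 => π (k, m2)) (hrow k)
  have eJ : ∀ k : ℕ, ∑' m2 : ℕ, π (k, m2 - 1) * (if 0 < m2 then (1:ℝ) else 0)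
      = ∑' m2 : ℕ, π (k, m2) :=
    fun k => tsum_shiftJ' (fun m2 => π (k, m2)) (hrow k)
  have eI : ∀ k : ℕ, ∑' m2 : ℕ, (if m2 = 0 then (1:ℝ) else 0) * π (k, m2) = π (k, 0) :=
    fun k => tsum_ind0' (fun m2 => π (k, m2))
  -- the cut equations
  have cut : ∀ k : ℕ, mu1 * c1 * (∑' m2 : ℕ, π (k, m2))
      = la1 * (∑' m2 : ℕ, π (k + 1, m2)) + p2 * la2 * π (k + 1, 0) := by
    intro k
    induction k with
    | zero =>
      have hpt : ∀ m2 : ℕ,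
          (mu1*c1 + mu2*c2 + la2 + p1*la1) * π (0, m2)
            + (-la2 - p1*la1) * ((if m2 = 0 then (1:ℝ) else 0) * π (0, m2))
          = mu2*c2 * (π (0, m2-1) * (if 0 < m2 then (1:ℝ) else 0))
            + (la1 * π (1, m2)
            + (p2*la2 * ((if m2 = 0 then (1:ℝ) else 0) * π (1, m2))
            + (la2 + p1*la1) * π (0, m2+1))) := by
        intro m2
        have h := hbal 0 m2
        rcases m2 with _ | n
        · simp at h ⊢
          linear_combination h
        · simp at h ⊢
          linear_combination h
      have hcol := tsum_congr (L := SummationFilter.unconditional ℕ) hpt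
      rw [Summable.tsum_add (((hrow 0).mul_left _)) ((summable_ind0' _).mul_left _),
          Summable.tsum_add ((summable_shiftJ' (fun m2 => π (0, m2)) (hrow 0)).mul_left _)
            ((((hrow 1).mul_left _)).add
              (((summable_ind0' _).mul_left _).add
                ((((summable_nat_add_iff 1).2 (hrow 0))).mul_left _))),
          Summable.tsum_add (((hrow 1).mul_left _))
            (((summable_ind0' _).mul_left _).add
              ((((summable_nat_add_iff 1).2 (hrow 0))).mul_left _)),
          Summable.tsum_add ((summable_ind0' _).mul_left _)
            ((((summable_nat_add_iff 1).2 (hrow 0))).mul_left _),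
          tsum_mul_left, tsum_mul_left, tsum_mul_left, tsum_mul_left, tsum_mul_left,
          tsum_mul_left, eI 0, eI 1, eJ 0, eshift 0] at hcol
      linear_combination hcol
    | succ k ih =>
      have hpt : ∀ m2 : ℕ,
          (mu1*c1 + mu2*c2 + la1 + la2) * π (k+1, m2)
            + (p2*la2 - la2) * ((if m2 = 0 then (1:ℝ) else 0) * π (k+1, m2))
          = mu1*c1 * π (k, m2)
            + (mu2*c2 * (π (k+1, m2-1) * (if 0 < m2 then (1:ℝ) else 0))
            + (la1 * π (k+2, m2)
            + (p2*la2 * ((if m2 = 0 then (1:ℝ) else 0) * π (k+2, m2))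
            + la2 * π (k+1, m2+1)))) := by
        intro m2
        have h := hbal (k+1) m2
        rcases m2 with _ | n
        · simp at h ⊢
          linear_combination h
        · simp at h ⊢
          linear_combination h
      have hcol := tsum_congr (L := SummationFilter.unconditional ℕ) hpt
      rw [Summable.tsum_add (((hrow (k+1)).mul_left _)) ((summable_ind0' _).mul_left _),
          Summable.tsum_add (((hrow k).mul_left _))
            (((summable_shiftJ' (fun m2 => π (k+1, m2)) (hrow (k+1))).mul_left _).add
              ((((hrow (k+2)).mul_left _)).add
                (((summable_ind0' _).mul_left _).add
                  ((((summable_nat_add_iff 1).2 (hrow (k+1)))).mul_left _)))),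
          Summable.tsum_add ((summable_shiftJ' (fun m2 => π (k+1, m2)) (hrow (k+1))).mul_left _)
            ((((hrow (k+2)).mul_left _)).add
              (((summable_ind0' _).mul_left _).add
                ((((summable_nat_add_iff 1).2 (hrow (k+1)))).mul_left _))),
          Summable.tsum_add (((hrow (k+2)).mul_left _))
            (((summable_ind0' _).mul_left _).add
              ((((summable_nat_add_iff 1).2 (hrow (k+1)))).mul_left _)),
          Summable.tsum_add ((summable_ind0' _).mul_left _)
            ((((summable_nat_add_iff 1).2 (hrow (k+1)))).mul_left _),
          tsum_mul_left, tsum_mul_left, tsum_mul_left, tsum_mul_left, tsum_mul_left,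
          tsum_mul_left, tsum_mul_left,
          eI (k+1), eI (k+2), eJ (k+1), eshift (k+1)] at hcol
      linear_combination hcol + ih
  -- assemble: sum the cut equations over k
  have hSsum : Summable (fun k : ℕ => ∑' m2 : ℕ, π (k, m2)) := hsum.prod
  have hfub : ∑' k : ℕ, ∑' m2 : ℕ, π (k, m2) = 1 := (Summable.tsum_prod hsum).symm.trans htot
  have hfinal : mu1 * c1 * ∑' k : ℕ, ∑' m2 : ℕ, π (k, m2)
      = la1 * ∑' k : ℕ, ∑' m2 : ℕ, π (k + 1, m2)
        + p2 * la2 * ∑' k : ℕ, π (k + 1, 0) := by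
    rw [← tsum_mul_left, ← tsum_mul_left, ← tsum_mul_left,
        ← Summable.tsum_add (((summable_nat_add_iff 1).2 hSsum).mul_left _)
          (((summable_nat_add_iff 1).2 hcol0).mul_left _)]
    exact tsum_congr cut
  have hS1 : ∑' k : ℕ, ∑' m2 : ℕ, π (k + 1, m2)
      = (∑' k : ℕ, ∑' m2 : ℕ, π (k, m2)) - ∑' m2 : ℕ, π (0, m2) :=
    tsum_shift1' (fun k => ∑' m2 : ℕ, π (k, m2)) hSsum
  have hP1 : ∑' k : ℕ, π (k + 1, 0) = (∑' k : ℕ, π (k, 0)) - π (0, 0) :=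
    tsum_shift1' (fun k => π (k, 0)) hcol0
  rw [hfub, hS1, hP1, hfub] at hfinal
  linarith [hfinal]
end

section
/- Assume p₁p₂ < 1. If π is an invariant distribution of the random walk (m̄_c(t)), then P(0,1) = (λ₁ − μ₁c₁ + p₂(λ₂ − μ₂c₂) − p₂(λ₂ + λ₁p₁)·π(0,0)) / ((1 − p₁p₂)·λ₁), where P(0,1) = Σ_{m₂∈ℕ} π(0,m₂). -/
lemma key_balance (la1 la2 mu1 mu2 l1 l2 p1 p2 : ℝ) (π : ℕ × ℕ → ℝ)
    (hsum : Summable π) (htot : ∑' m : ℕ × ℕ, π m = 1)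
    (hbal : ∀ m1 m2 : ℕ,
      π (m1, m2) * (mu1 * l1 + mu2 * l2
        + (la1 + p2 * la2 * (if m2 = 0 then 1 else 0)) * (if 0 < m1 then 1 else 0)
        + (la2 + p1 * la1 * (if m1 = 0 then 1 else 0)) * (if 0 < m2 then 1 else 0))
      = mu1 * l1 * π (m1 - 1, m2) * (if 0 < m1 then 1 else 0)
        + mu2 * l2 * π (m1, m2 - 1) * (if 0 < m2 then 1 else 0)
        + (la1 + p2 * la2 * (if m2 = 0 then 1 else 0)) * π (m1 + 1, m2)
        + (la2 + p1 * la1 * (if m1 = 0 then 1 else 0)) * π (m1, m2 + 1)) :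
    mu1 * l1 = la1 * (1 - ∑' m2 : ℕ, π (0, m2))
      + p2 * la2 * ((∑' m1 : ℕ, π (m1, 0)) - π (0, 0)) := by
  set Q : ℕ → ℝ := fun j => ∑' m2 : ℕ, π (j, m2) with hQdef
  have hfib : ∀ j, HasSum (fun m2 => π (j, m2)) (Q j) := by
    intro j
    exact (hsum.comp_injective (fun a b hab => by simpa using hab :
      Function.Injective (fun m2 => ((j, m2) : ℕ × ℕ)))).hasSum
  have hQ1 : HasSum Q 1 := by
    have h := hsum.hasSum
    rw [htot] at h
    exact h.prod_fiberwise hfib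
  set B : ℝ := ∑' m1 : ℕ, π (m1, 0) with hBdef
  have hB : HasSum (fun j => π (j, 0)) B := by
    exact (hsum.comp_injective (fun a b hab => by simpa using hab :
      Function.Injective (fun m1 => ((m1, 0) : ℕ × ℕ)))).hasSum
  -- basic per-column HasSum facts
  have h0 : ∀ j, HasSum (fun m2 : ℕ => π (j, m2) * (if m2 = 0 then (1:ℝ) else 0)) (π (j, 0)) := by
    intro j
    have he : (fun m2 : ℕ => π (j, m2) * (if m2 = 0 then (1:ℝ) else 0))
        = fun m2 : ℕ => if m2 = 0 then π (j, 0) else 0 := by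
      funext m2; by_cases h : m2 = 0 <;> simp [h]
    rw [he]; exact hasSum_ite_eq 0 _
  have hshift : ∀ j, HasSum (fun m2 : ℕ => π (j, m2 + 1)) (Q j - π (j, 0)) := by
    intro j
    refine (hasSum_nat_add_iff (f := fun m2 : ℕ => π (j, m2)) 1).mpr ?_
    have h1 : Q j - π (j, 0) + ∑ i ∈ Finset.range 1, π (j, i) = Q j := by simp
    rw [h1]; exact hfib j
  have hind : ∀ j, HasSum (fun m2 : ℕ => π (j, m2) * (if 0 < m2 then (1:ℝ) else 0))
      (Q j - π (j, 0)) := by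
    intro j
    have h1 : HasSum (fun m2 : ℕ => π (j, m2 + 1) * (if 0 < m2 + 1 then (1:ℝ) else 0))
        (Q j - π (j, 0)) := by simpa using hshift j
    have h2 := (hasSum_nat_add_iff (f := fun m2 : ℕ => π (j, m2) * (if 0 < m2 then (1:ℝ) else 0)) 1).mp h1
    simpa using h2
  have hup : ∀ j, HasSum (fun m2 : ℕ => π (j, m2 - 1) * (if 0 < m2 then (1:ℝ) else 0)) (Q j) := by
    intro j
    have h1 : HasSum (fun m2 : ℕ => π (j, (m2 + 1) - 1) * (if 0 < m2 + 1 then (1:ℝ) else 0))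
        (Q j) := by simpa using hfib j
    have h2 := (hasSum_nat_add_iff (f := fun m2 : ℕ => π (j, m2 - 1) * (if 0 < m2 then (1:ℝ) else 0)) 1).mp h1
    simpa using h2
  -- column balance
  have hcol : ∀ j : ℕ,
      (mu1 * l1 + mu2 * l2 + la1 * (if 0 < j then (1:ℝ) else 0)) * Q j
        + (p2 * la2 * (if 0 < j then (1:ℝ) else 0)) * π (j, 0)
        + (la2 + p1 * la1 * (if j = 0 then (1:ℝ) else 0)) * (Q j - π (j, 0))
      = (mu1 * l1 * (if 0 < j then (1:ℝ) else 0)) * Q (j - 1)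
        + mu2 * l2 * Q j + la1 * Q (j + 1) + p2 * la2 * π (j + 1, 0)
        + (la2 + p1 * la1 * (if j = 0 then (1:ℝ) else 0)) * (Q j - π (j, 0)) := by
    intro j
    set I : ℝ := if 0 < j then (1:ℝ) else 0 with hI
    set J : ℝ := if j = 0 then (1:ℝ) else 0 with hJ
    have hL : HasSum (fun m2 : ℕ =>
        (mu1 * l1 + mu2 * l2 + la1 * I) * π (j, m2)
        + (p2 * la2 * I) * (π (j, m2) * (if m2 = 0 then (1:ℝ) else 0))
        + (la2 + p1 * la1 * J) * (π (j, m2) * (if 0 < m2 then (1:ℝ) else 0)))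
        ((mu1 * l1 + mu2 * l2 + la1 * I) * Q j + (p2 * la2 * I) * π (j, 0)
          + (la2 + p1 * la1 * J) * (Q j - π (j, 0))) :=
      (((hfib j).mul_left _).add ((h0 j).mul_left _)).add ((hind j).mul_left _)
    have hR : HasSum (fun m2 : ℕ =>
        (mu1 * l1 * I) * π (j - 1, m2)
        + mu2 * l2 * (π (j, m2 - 1) * (if 0 < m2 then (1:ℝ) else 0))
        + la1 * π (j + 1, m2)
        + p2 * la2 * (π (j + 1, m2) * (if m2 = 0 then (1:ℝ) else 0))
        + (la2 + p1 * la1 * J) * π (j, m2 + 1))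
        ((mu1 * l1 * I) * Q (j - 1) + mu2 * l2 * Q j + la1 * Q (j + 1)
          + p2 * la2 * π (j + 1, 0) + (la2 + p1 * la1 * J) * (Q j - π (j, 0))) :=
      (((((hfib (j-1)).mul_left _).add ((hup j).mul_left _)).add
        ((hfib (j+1)).mul_left _)).add ((h0 (j+1)).mul_left _)).add ((hshift j).mul_left _)
    have hfe : (fun m2 : ℕ =>
        (mu1 * l1 + mu2 * l2 + la1 * I) * π (j, m2)
        + (p2 * la2 * I) * (π (j, m2) * (if m2 = 0 then (1:ℝ) else 0))
        + (la2 + p1 * la1 * J) * (π (j, m2) * (if 0 < m2 then (1:ℝ) else 0)))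
        = (fun m2 : ℕ =>
        (mu1 * l1 * I) * π (j - 1, m2)
        + mu2 * l2 * (π (j, m2 - 1) * (if 0 < m2 then (1:ℝ) else 0))
        + la1 * π (j + 1, m2)
        + p2 * la2 * (π (j + 1, m2) * (if m2 = 0 then (1:ℝ) else 0))
        + (la2 + p1 * la1 * J) * π (j, m2 + 1)) := by
      funext m2
      rw [hI, hJ]
      linear_combination hbal j m2
    rw [hfe] at hL
    have := hL.unique hR
    linarith [this]
  -- recursion
  have hrec : ∀ j : ℕ, mu1 * l1 * Q j = la1 * Q (j + 1) + p2 * la2 * π (j + 1, 0) := by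
    intro j
    induction j with
    | zero =>
      have h := hcol 0
      simp only [lt_irrefl, if_neg, if_pos] at h
      norm_num at h
      linarith
    | succ n ih =>
      have h := hcol (n + 1)
      have h1 : (0:ℕ) < n + 1 := Nat.succ_pos n
      have h2 : ¬ (n + 1 = 0) := Nat.succ_ne_zero n
      simp only [if_pos h1, if_neg h2] at h
      have h3 : (n + 1 : ℕ) - 1 = n := rfl
      rw [h3] at h
      linarith
  -- sum the recursion
  have hQs : HasSum (fun j : ℕ => Q (j + 1)) (1 - Q 0) := by
    refine (hasSum_nat_add_iff (f := Q) 1).mpr ?_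
    have h1 : 1 - Q 0 + ∑ i ∈ Finset.range 1, Q i = 1 := by simp
    rw [h1]; exact hQ1
  have hBs : HasSum (fun j : ℕ => π (j + 1, 0)) (B - π (0, 0)) := by
    refine (hasSum_nat_add_iff (f := fun j : ℕ => π (j, 0)) 1).mpr ?_
    have h1 : B - π (0, 0) + ∑ i ∈ Finset.range 1, π (i, 0) = B := by simp
    rw [h1]; exact hB
  have hL : HasSum (fun j : ℕ => mu1 * l1 * Q j) (mu1 * l1 * 1) := hQ1.mul_left _
  have hR : HasSum (fun j : ℕ => la1 * Q (j + 1) + p2 * la2 * π (j + 1, 0))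
      (la1 * (1 - Q 0) + p2 * la2 * (B - π (0, 0))) :=
    (hQs.mul_left _).add (hBs.mul_left _)
  have hfe : (fun j : ℕ => mu1 * l1 * Q j)
      = fun j : ℕ => la1 * Q (j + 1) + p2 * la2 * π (j + 1, 0) := funext hrec
  rw [hfe] at hL
  have := hL.unique hR
  linarith [this]


theorem stmt3 (la1 la2 mu1 mu2 c1 c2 p1 p2 : ℝ)
    (hla1 : 0 < la1) (hla2 : 0 < la2) (hmu1 : 0 < mu1) (hmu2 : 0 < mu2)
    (hc1 : 0 < c1) (hc2 : 0 < c2)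
    (hp1 : 0 ≤ p1) (hp1' : p1 ≤ 1) (hp2 : 0 ≤ p2) (hp2' : p2 ≤ 1)
    (hp : p1 * p2 < 1)
    (π : ℕ × ℕ → ℝ) (hπ : IsInvariantDist la1 la2 mu1 mu2 c1 c2 p1 p2 π) :
    (∑' m2 : ℕ, π (0, m2))
      = (la1 - mu1 * c1 + p2 * (la2 - mu2 * c2) - p2 * (la2 + la1 * p1) * π (0, 0))
          / ((1 - p1 * p2) * la1) := by
  obtain ⟨hpos, htot, hbal⟩ := hπ
  have hsum : Summable π := by
    by_contra h
    rw [tsum_eq_zero_of_not_summable h] at htot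
    norm_num at htot
  have hI := key_balance la1 la2 mu1 mu2 c1 c2 p1 p2 π hsum htot hbal
  -- swapped distribution
  set π' : ℕ × ℕ → ℝ := fun m => π (m.2, m.1) with hπ'def
  have hsum' : Summable π' := by
    have : π' = π ∘ (Equiv.prodComm ℕ ℕ) := rfl
    rw [this]
    exact hsum.comp_injective (Equiv.prodComm ℕ ℕ).injective
  have htot' : ∑' m : ℕ × ℕ, π' m = 1 := by
    rw [← htot]
    exact Equiv.tsum_eq (Equiv.prodComm ℕ ℕ) π
  have hbal' : ∀ m1 m2 : ℕ,
      π' (m1, m2) * (mu2 * c2 + mu1 * c1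
        + (la2 + p1 * la1 * (if m2 = 0 then 1 else 0)) * (if 0 < m1 then 1 else 0)
        + (la1 + p2 * la2 * (if m1 = 0 then 1 else 0)) * (if 0 < m2 then 1 else 0))
      = mu2 * c2 * π' (m1 - 1, m2) * (if 0 < m1 then 1 else 0)
        + mu1 * c1 * π' (m1, m2 - 1) * (if 0 < m2 then 1 else 0)
        + (la2 + p1 * la1 * (if m2 = 0 then 1 else 0)) * π' (m1 + 1, m2)
        + (la1 + p2 * la2 * (if m1 = 0 then 1 else 0)) * π' (m1, m2 + 1) := by
    intro m1 m2
    simp only [hπ'def]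
    linear_combination hbal m2 m1
  have hII := key_balance la2 la1 mu2 mu1 c2 c1 p2 p1 π' hsum' htot' hbal'
  have e1 : (∑' m2 : ℕ, π' (0, m2)) = ∑' m1 : ℕ, π (m1, 0) := rfl
  have e2 : (∑' m1 : ℕ, π' (m1, 0)) = ∑' m2 : ℕ, π (0, m2) := rfl
  have e3 : π' (0, 0) = π (0, 0) := rfl
  rw [e1, e2, e3] at hII
  set A : ℝ := ∑' m2 : ℕ, π (0, m2)
  set B : ℝ := ∑' m1 : ℕ, π (m1, 0)
  have hden : (1 - p1 * p2) * la1 ≠ 0 := ne_of_gt (by nlinarith)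
  rw [eq_div_iff hden]
  linear_combination hI + p2 * hII
end

section
/- Assume p₁p₂ < 1. If π is an invariant distribution of the random walk (m̄_c(t)), then P(1,0) = (λ₂ − μ₂c₂ + p₁(λ₁ − μ₁c₁) − p₁(λ₁ + λ₂p₂)·π(0,0)) / ((1 − p₁p₂)·λ₂), where P(1,0) = Σ_{m₁∈ℕ} π(m₁,0). -/
set_option maxHeartbeats 1000000 in
lemma cut_aux (la1 la2 mu1 mu2 c1 c2 p1 p2 : ℝ) (π : ℕ × ℕ → ℝ)
    (hπ : IsInvariantDist la1 la2 mu1 mu2 c1 c2 p1 p2 π) :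
    la2 * (1 - ∑' i, π (i, 0)) + p1 * la1 * ((∑' j, π (0, j)) - π (0, 0))
      = mu2 * c2 := by
  obtain ⟨hpos, htot, hbal⟩ := hπ
  have hsum : Summable π := by
    by_contra h
    rw [tsum_eq_zero_of_not_summable h] at htot
    norm_num at htot
  have hrow : ∀ j, Summable (fun i => π (i, j)) := fun j =>
    hsum.comp_injective (fun a b hab => by simpa using hab :
      Function.Injective (fun i => ((i, j) : ℕ × ℕ)))
  have hU : Summable (fun j => π (0, j)) :=
    hsum.comp_injective (fun a b hab => by simpa using hab :
      Function.Injective (fun j => ((0, j) : ℕ × ℕ)))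
  -- row-sum relation
  have hrowrel : ∀ j : ℕ,
      mu2 * c2 * (∑' i, π (i, j))
        + (if 0 < j then (1:ℝ) else 0) * (la2 * (∑' i, π (i, j)) + p1 * la1 * π (0, j))
      = mu2 * c2 * (if 0 < j then (1:ℝ) else 0) * (∑' i, π (i, j - 1))
        + la2 * (∑' i, π (i, j + 1)) + p1 * la1 * π (0, j + 1) := by
    intro j
    have s1 := hrow j
    have s4 := hrow (j - 1)
    have s6 := hrow (j + 1)
    have s5 : Summable (fun n => π (n + 1, j)) := (summable_nat_add_iff 1).mpr s1
    have s2 : Summable (fun m1 : ℕ => if m1 = 0 then π (0, j) else 0) := by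
      apply summable_of_ne_finset_zero (s := {0})
      intro b hb
      simp only [Finset.mem_singleton] at hb
      simp [hb]
    have s7 : Summable (fun m1 : ℕ => if m1 = 0 then π (0, j + 1) else 0) := by
      apply summable_of_ne_finset_zero (s := {0})
      intro b hb
      simp only [Finset.mem_singleton] at hb
      simp [hb]
    have s3 : Summable (fun m1 : ℕ => if m1 = 0 then 0 else π (m1 - 1, j)) := by
      apply (summable_nat_add_iff 1).mp
      simpa using s1
    -- pointwise identity
    have hpt : ∀ m1 : ℕ,
        (mu1 * c1 + mu2 * c2 + (la1 + p2 * la2 * (if j = 0 then (1:ℝ) else 0))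
            + la2 * (if 0 < j then (1:ℝ) else 0)) * π (m1, j)
          + (p1 * la1 * (if 0 < j then (1:ℝ) else 0)
              - (la1 + p2 * la2 * (if j = 0 then (1:ℝ) else 0)))
            * (if m1 = 0 then π (0, j) else 0)
        = mu1 * c1 * (if m1 = 0 then 0 else π (m1 - 1, j))
          + mu2 * c2 * (if 0 < j then (1:ℝ) else 0) * π (m1, j - 1)
          + (la1 + p2 * la2 * (if j = 0 then (1:ℝ) else 0)) * π (m1 + 1, j)
          + la2 * π (m1, j + 1)
          + p1 * la1 * (if m1 = 0 then π (0, j + 1) else 0) := by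
      intro m1
      have h := hbal m1 j
      rcases Nat.eq_zero_or_pos j with hj | hj
      · subst hj
        match m1 with
        | 0 => norm_num at h ⊢; linear_combination h
        | Nat.succ n =>
          simp only [Nat.succ_ne_zero, Nat.succ_sub_one, Nat.succ_pos, lt_irrefl,
            if_true, if_false, ite_true, ite_false] at h ⊢
          linear_combination h
      · have hj' : j ≠ 0 := hj.ne'
        match m1 with
        | 0 =>
          simp only [hj, hj', Nat.succ_ne_zero, lt_irrefl, if_true, if_false,
            ite_true, ite_false] at h ⊢
          linear_combination h
        | Nat.succ n =>
          simp only [hj, hj', Nat.succ_ne_zero, Nat.succ_sub_one, Nat.succ_pos,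
            if_true, if_false, ite_true, ite_false] at h ⊢
          linear_combination h
    have hts := tsum_congr (L := SummationFilter.unconditional ℕ) hpt
    rw [Summable.tsum_add (s1.mul_left _) (s2.mul_left _),
        Summable.tsum_add ((((s3.mul_left _).add (s4.mul_left _)).add (s5.mul_left _)).add
          (s6.mul_left _)) (s7.mul_left _),
        Summable.tsum_add (((s3.mul_left _).add (s4.mul_left _)).add (s5.mul_left _)) (s6.mul_left _),
        Summable.tsum_add ((s3.mul_left _).add (s4.mul_left _)) (s5.mul_left _),
        Summable.tsum_add (s3.mul_left _) (s4.mul_left _)] at hts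
    simp only [tsum_mul_left] at hts
    have hg2 : ∑' m1 : ℕ, (if m1 = 0 then π (0, j) else 0) = π (0, j) := tsum_ite_eq 0 _
    have hg7 : ∑' m1 : ℕ, (if m1 = 0 then π (0, j + 1) else 0) = π (0, j + 1) :=
      tsum_ite_eq 0 _
    have hg3 : ∑' m1 : ℕ, (if m1 = 0 then (0:ℝ) else π (m1 - 1, j)) = ∑' i, π (i, j) := by
      rw [Summable.tsum_eq_zero_add s3]
      simp
    have hg5 : ∑' n : ℕ, π (n + 1, j) = (∑' i, π (i, j)) - π (0, j) := by
      have h0 := Summable.tsum_eq_zero_add s1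
      linarith
    rw [hg2, hg7, hg3, hg5] at hts
    linear_combination hts
  -- inductive cut relation
  have hG : ∀ j : ℕ, la2 * (∑' i, π (i, j + 1)) + p1 * la1 * π (0, j + 1)
      = mu2 * c2 * (∑' i, π (i, j)) := by
    intro j
    induction j with
    | zero =>
      have h := hrowrel 0
      norm_num at h
      linarith
    | succ n ih =>
      have h := hrowrel (n + 1)
      simp only [Nat.succ_pos, if_pos, if_true, Nat.succ_sub_one] at h
      linarith
  -- marginals
  have hswap : Summable (fun p : ℕ × ℕ => π (p.2, p.1)) :=
    ((Equiv.prodComm ℕ ℕ).summable_iff).mpr hsum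
  have hTsum : Summable (fun j => ∑' i, π (i, j)) :=
    ((summable_prod_of_nonneg (fun p => hpos _)).mp hswap).2
  have hTtot : ∑' j, ∑' i, π (i, j) = 1 := by
    have h1 := Summable.tsum_prod hswap
    have h2 : ∑' p : ℕ × ℕ, π (p.2, p.1) = ∑' p : ℕ × ℕ, π p :=
      (Equiv.prodComm ℕ ℕ).tsum_eq π
    rw [h2, htot] at h1
    exact h1.symm
  have hs1 : Summable (fun j => ∑' i, π (i, j + 1)) := (summable_nat_add_iff 1).mpr hTsum
  have hs2 : Summable (fun j => π (0, j + 1)) := (summable_nat_add_iff 1).mpr hU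
  have hsumG := tsum_congr (L := SummationFilter.unconditional ℕ) hG
  rw [Summable.tsum_add (hs1.mul_left la2) (hs2.mul_left (p1 * la1))] at hsumG
  simp only [tsum_mul_left] at hsumG
  have h1 : ∑' j, (∑' i, π (i, j + 1)) = 1 - ∑' i, π (i, 0) := by
    have h0 := Summable.tsum_eq_zero_add hTsum
    rw [hTtot] at h0
    linarith
  have h2 : ∑' j, π (0, j + 1) = (∑' j, π (0, j)) - π (0, 0) := by
    have h0 := Summable.tsum_eq_zero_add hU
    linarith
  rw [h1, h2, hTtot] at hsumG
  linarith

theorem stmt4 (la1 la2 mu1 mu2 c1 c2 p1 p2 : ℝ)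
    (hla1 : 0 < la1) (hla2 : 0 < la2) (hmu1 : 0 < mu1) (hmu2 : 0 < mu2)
    (hc1 : 0 < c1) (hc2 : 0 < c2)
    (hp1 : 0 ≤ p1) (hp1' : p1 ≤ 1) (hp2 : 0 ≤ p2) (hp2' : p2 ≤ 1)
    (hp : p1 * p2 < 1)
    (π : ℕ × ℕ → ℝ) (hπ : IsInvariantDist la1 la2 mu1 mu2 c1 c2 p1 p2 π) :
    (∑' m1 : ℕ, π (m1, 0))
      = (la2 - mu2 * c2 + p1 * (la1 - mu1 * c1) - p1 * (la1 + la2 * p2) * π (0, 0))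
          / ((1 - p1 * p2) * la2) := by
  obtain ⟨hpos, htot, hbal⟩ := hπ
  have eq1 := cut_aux la1 la2 mu1 mu2 c1 c2 p1 p2 π ⟨hpos, htot, hbal⟩
  have hswapinv : IsInvariantDist la2 la1 mu2 mu1 c2 c1 p2 p1 (fun p => π p.swap) := by
    refine ⟨fun m => hpos _, ?_, ?_⟩
    · have h2 : ∑' p : ℕ × ℕ, π p.swap = ∑' p : ℕ × ℕ, π p :=
        (Equiv.prodComm ℕ ℕ).tsum_eq π
      rw [h2, htot]
    · intro m1 m2
      simp only [Prod.swap_prod_mk]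
      linear_combination hbal m2 m1
  have eq2 := cut_aux la2 la1 mu2 mu1 c2 c1 p2 p1 _ hswapinv
  simp only [Prod.swap_prod_mk] at eq2
  have hq : (1 - p1 * p2) * la2 ≠ 0 := by
    have : 0 < 1 - p1 * p2 := by linarith
    positivity
  rw [eq_div_iff hq]
  linear_combination (-1 : ℝ) * eq1 - p1 * eq2
end

section
/- If π is an invariant distribution of the random walk (m̄_c(t)), then for all complex numbers x, y with |x| ≤ 1 and |y| ≤ 1, the generating function P(x,y) = Σ_{(m₁,m₂)∈ℕ×ℕ} π(m₁,m₂)·x^{m₁}·y^{m₂} (which converges absolutely) satisfies the functional equation h₁(x,y)·P(x,y) = h₂(x,y)·P(x,0) + h₃(x,y)·P(0,y) + h₄(x,y)·π(0,0). -/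
/-- h₁(x,y) = −μ₁c₁x²y − μ₂c₂xy² + (λ₁+λ₂+μ₁c₁+μ₂c₂)xy − λ₁y − λ₂x -/
noncomputable def h1 (la1 la2 mu1 mu2 c1 c2 : ℝ) (x y : ℂ) : ℂ :=
  -((mu1 : ℂ) * c1) * x ^ 2 * y - ((mu2 : ℂ) * c2) * x * y ^ 2
    + ((la1 : ℂ) + la2 + mu1 * c1 + mu2 * c2) * x * y - (la1 : ℂ) * y - (la2 : ℂ) * x

/-- h₂(x,y) = λ₂((1−p₂)xy − x + p₂y) -/
noncomputable def h2 (la2 p2 : ℝ) (x y : ℂ) : ℂ :=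
  (la2 : ℂ) * ((1 - (p2 : ℂ)) * x * y - x + (p2 : ℂ) * y)

/-- h₃(x,y) = λ₁((1−p₁)xy − y + p₁x) -/
noncomputable def h3 (la1 p1 : ℝ) (x y : ℂ) : ℂ :=
  (la1 : ℂ) * ((1 - (p1 : ℂ)) * x * y - y + (p1 : ℂ) * x)

/-- h₄(x,y) = (λ₁p₁+λ₂p₂)xy − p₂λ₂y − p₁λ₁x -/
noncomputable def h4 (la1 la2 p1 p2 : ℝ) (x y : ℂ) : ℂ :=
  ((la1 : ℂ) * p1 + (la2 : ℂ) * p2) * x * y - (p2 : ℂ) * la2 * y - (p1 : ℂ) * la1 * x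

/-- The bivariate generating function P(x,y) = Σ π(m₁,m₂) x^{m₁} y^{m₂}. -/
noncomputable def genFun (π : ℕ × ℕ → ℝ) (x y : ℂ) : ℂ :=
  ∑' m : ℕ × ℕ, (π m : ℂ) * x ^ m.1 * y ^ m.2

lemma shift_fst_tsum (f : ℕ × ℕ → ℂ) (h0 : ∀ m : ℕ × ℕ, m.1 = 0 → f m = 0) :
    ∑' m : ℕ × ℕ, f (m.1 + 1, m.2) = ∑' m, f m := by
  have hinj : Function.Injective (fun m : ℕ × ℕ => ((m.1 + 1, m.2) : ℕ × ℕ)) := by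
    rintro ⟨a1, a2⟩ ⟨b1, b2⟩ h
    simp only [Prod.mk.injEq] at h
    exact Prod.ext (by omega) h.2
  exact hinj.tsum_eq (by
    intro m hm
    by_contra hr
    exact hm (h0 m (by
      by_contra h1
      exact hr ⟨(m.1 - 1, m.2), by simp [Prod.ext_iff]; omega⟩)))

lemma shift_snd_tsum (f : ℕ × ℕ → ℂ) (h0 : ∀ m : ℕ × ℕ, m.2 = 0 → f m = 0) :
    ∑' m : ℕ × ℕ, f (m.1, m.2 + 1) = ∑' m, f m := by
  have hinj : Function.Injective (fun m : ℕ × ℕ => ((m.1, m.2 + 1) : ℕ × ℕ)) := by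
    rintro ⟨a1, a2⟩ ⟨b1, b2⟩ h
    simp only [Prod.mk.injEq] at h
    exact Prod.ext h.1 (by omega)
  exact hinj.tsum_eq (by
    intro m hm
    by_contra hr
    exact hm (h0 m (by
      by_contra h1
      exact hr ⟨(m.1, m.2 - 1), by simp [Prod.ext_iff]; omega⟩)))

lemma shift_fst_summable (f : ℕ × ℕ → ℂ) (h0 : ∀ m : ℕ × ℕ, m.1 = 0 → f m = 0)
    (hs : Summable (fun m : ℕ × ℕ => f (m.1 + 1, m.2))) : Summable f := by
  have hinj : Function.Injective (fun m : ℕ × ℕ => ((m.1 + 1, m.2) : ℕ × ℕ)) := by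
    rintro ⟨a1, a2⟩ ⟨b1, b2⟩ h
    simp only [Prod.mk.injEq] at h
    exact Prod.ext (by omega) h.2
  exact (hinj.summable_iff (by
    intro m hr
    apply h0 m
    by_contra h1
    exact hr ⟨(m.1 - 1, m.2), by simp [Prod.ext_iff]; omega⟩)).mp hs

lemma shift_snd_summable (f : ℕ × ℕ → ℂ) (h0 : ∀ m : ℕ × ℕ, m.2 = 0 → f m = 0)
    (hs : Summable (fun m : ℕ × ℕ => f (m.1, m.2 + 1))) : Summable f := by
  have hinj : Function.Injective (fun m : ℕ × ℕ => ((m.1, m.2 + 1) : ℕ × ℕ)) := by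
    rintro ⟨a1, a2⟩ ⟨b1, b2⟩ h
    simp only [Prod.mk.injEq] at h
    exact Prod.ext h.1 (by omega)
  exact (hinj.summable_iff (by
    intro m hr
    apply h0 m
    by_contra h1
    exact hr ⟨(m.1, m.2 - 1), by simp [Prod.ext_iff]; omega⟩)).mp hs

theorem stmt5 (la1 la2 mu1 mu2 c1 c2 p1 p2 : ℝ)
    (hla1 : 0 < la1) (hla2 : 0 < la2) (hmu1 : 0 < mu1) (hmu2 : 0 < mu2)
    (hc1 : 0 < c1) (hc2 : 0 < c2)
    (hp1 : 0 ≤ p1) (hp1' : p1 ≤ 1) (hp2 : 0 ≤ p2) (hp2' : p2 ≤ 1)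
    (π : ℕ × ℕ → ℝ) (hπ : IsInvariantDist la1 la2 mu1 mu2 c1 c2 p1 p2 π) :
    ∀ x y : ℂ, ‖x‖ ≤ 1 → ‖y‖ ≤ 1 →
      Summable (fun m : ℕ × ℕ => ‖(π m : ℂ) * x ^ m.1 * y ^ m.2‖) ∧
      h1 la1 la2 mu1 mu2 c1 c2 x y * genFun π x y
        = h2 la2 p2 x y * genFun π x 0 + h3 la1 p1 x y * genFun π 0 y
          + h4 la1 la2 p1 p2 x y * (π (0, 0) : ℂ) := by
  obtain ⟨hpos, hone, hbal⟩ := hπ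
  intro x y hx hy
  have hxn : ‖x‖ ≤ 1 := hx
  have hyn : ‖y‖ ≤ 1 := hy
  have hπs : Summable π := by
    by_contra h
    rw [tsum_eq_zero_of_not_summable h] at hone
    norm_num at hone
  have hbd : ∀ m : ℕ × ℕ, ‖(π m : ℂ) * x ^ m.1 * y ^ m.2‖ ≤ π m := by
    intro m
    have he : ‖(π m : ℂ) * x ^ m.1 * y ^ m.2‖ = |π m| * ‖x‖ ^ m.1 * ‖y‖ ^ m.2 := by
      simp [norm_mul, norm_pow, Complex.norm_real]
    rw [he, abs_of_nonneg (hpos m)]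
    have hx1 : ‖x‖ ^ m.1 ≤ 1 := pow_le_one₀ (norm_nonneg _) hxn
    have hy1 : ‖y‖ ^ m.2 ≤ 1 := pow_le_one₀ (norm_nonneg _) hyn
    have hstep : π m * ‖x‖ ^ m.1 * ‖y‖ ^ m.2 ≤ π m * 1 * 1 :=
      mul_le_mul (mul_le_mul le_rfl hx1 (pow_nonneg (norm_nonneg _) _) (hpos m)) hy1
        (pow_nonneg (norm_nonneg _) _) (mul_nonneg (hpos m) zero_le_one)
    linarith
  have hFnorm : Summable (fun m : ℕ × ℕ => ‖(π m : ℂ) * x ^ m.1 * y ^ m.2‖) :=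
    Summable.of_nonneg_of_le (fun _ => norm_nonneg _) hbd hπs
  refine ⟨hFnorm, ?_⟩
  -- main equation
  set F : ℕ × ℕ → ℂ := fun m => (π m : ℂ) * x ^ m.1 * y ^ m.2 with hFdef
  have hF : Summable F := hFnorm.of_norm
  have hFnorm' : Summable (fun m : ℕ × ℕ => ‖F m‖) := hFnorm
  have hFI : Summable (fun m : ℕ × ℕ => F m * (if m.1 = 0 then (1:ℂ) else 0)) := by
    apply Summable.of_norm_bounded hFnorm'
    intro m
    rw [norm_mul]
    split_ifs <;> simp
  have hFJ : Summable (fun m : ℕ × ℕ => F m * (if m.2 = 0 then (1:ℂ) else 0)) := by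
    apply Summable.of_norm_bounded hFnorm'
    intro m
    rw [norm_mul]
    split_ifs <;> simp
  have hFIJ : Summable (fun m : ℕ × ℕ =>
      F m * (if m.1 = 0 then (1:ℂ) else 0) * (if m.2 = 0 then (1:ℂ) else 0)) := by
    apply Summable.of_norm_bounded hFnorm'
    intro m
    rw [norm_mul, norm_mul]
    split_ifs <;> simp [norm_nonneg]
  have hgxy : genFun π x y = ∑' m, F m := rfl
  have hgx0 : genFun π x 0 = ∑' m : ℕ × ℕ, F m * (if m.2 = 0 then (1:ℂ) else 0) := by
    simp only [genFun]
    apply tsum_congr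
    intro m
    by_cases h : m.2 = 0
    · simp [hFdef, h]
    · simp [hFdef, h, zero_pow h]
  have hg0y : genFun π 0 y = ∑' m : ℕ × ℕ, F m * (if m.1 = 0 then (1:ℂ) else 0) := by
    simp only [genFun]
    apply tsum_congr
    intro m
    by_cases h : m.1 = 0
    · simp [hFdef, h]
    · simp [hFdef, h, zero_pow h]
  have hg00 : (∑' m : ℕ × ℕ, F m * (if m.1 = 0 then (1:ℂ) else 0)
      * (if m.2 = 0 then (1:ℂ) else 0)) = (π (0, 0) : ℂ) := by
    rw [tsum_eq_single ((0, 0) : ℕ × ℕ)]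
    · simp [hFdef]
    · intro b hb
      rcases b with ⟨b1, b2⟩
      by_cases h1 : b1 = 0
      · by_cases h2 : b2 = 0
        · exact absurd (by simp [h1, h2]) hb
        · simp [h2]
      · simp [h1]
  -- shifted families
  set T1 : ℕ × ℕ → ℂ := fun m => (π (m.1 - 1, m.2) : ℂ) * x ^ (m.1 + 1) * y ^ (m.2 + 1)
      * (1 - (if m.1 = 0 then (1:ℂ) else 0)) with hT1def
  set T2 : ℕ × ℕ → ℂ := fun m => (π (m.1, m.2 - 1) : ℂ) * x ^ (m.1 + 1) * y ^ (m.2 + 1)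
      * (1 - (if m.2 = 0 then (1:ℂ) else 0)) with hT2def
  set T3 : ℕ × ℕ → ℂ := fun m => (π (m.1 + 1, m.2) : ℂ) * x ^ (m.1 + 1) * y ^ (m.2 + 1)
      with hT3def
  set T4 : ℕ × ℕ → ℂ := fun m => (π (m.1 + 1, m.2) : ℂ) * x ^ (m.1 + 1) * y ^ (m.2 + 1)
      * (if m.2 = 0 then (1:ℂ) else 0) with hT4def
  set T5 : ℕ × ℕ → ℂ := fun m => (π (m.1, m.2 + 1) : ℂ) * x ^ (m.1 + 1) * y ^ (m.2 + 1)
      with hT5def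
  set T6 : ℕ × ℕ → ℂ := fun m => (π (m.1, m.2 + 1) : ℂ) * x ^ (m.1 + 1) * y ^ (m.2 + 1)
      * (if m.1 = 0 then (1:ℂ) else 0) with hT6def
  -- T1
  have h0T1 : ∀ m : ℕ × ℕ, m.1 = 0 → T1 m = 0 := by
    intro m hm; simp [hT1def, hm]
  have hcomp1 : (fun m : ℕ × ℕ => T1 (m.1 + 1, m.2)) = fun m => (x ^ 2 * y) * F m := by
    funext m
    simp only [hT1def, hFdef, Nat.add_sub_cancel, Nat.succ_ne_zero, if_false]
    ring
  have hT1s : Summable T1 := shift_fst_summable T1 h0T1 (by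
    rw [hcomp1]; exact hF.mul_left _)
  have hT1 : ∑' m, T1 m = (x ^ 2 * y) * ∑' m, F m := by
    rw [← shift_fst_tsum T1 h0T1, hcomp1, tsum_mul_left]
  -- T2
  have h0T2 : ∀ m : ℕ × ℕ, m.2 = 0 → T2 m = 0 := by
    intro m hm; simp [hT2def, hm]
  have hcomp2 : (fun m : ℕ × ℕ => T2 (m.1, m.2 + 1)) = fun m => (x * y ^ 2) * F m := by
    funext m
    simp only [hT2def, hFdef, Nat.add_sub_cancel, Nat.succ_ne_zero, if_false]
    ring
  have hT2s : Summable T2 := shift_snd_summable T2 h0T2 (by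
    rw [hcomp2]; exact hF.mul_left _)
  have hT2 : ∑' m, T2 m = (x * y ^ 2) * ∑' m, F m := by
    rw [← shift_snd_tsum T2 h0T2, hcomp2, tsum_mul_left]
  -- T3
  set G3 : ℕ × ℕ → ℂ := fun m => (1 - (if m.1 = 0 then (1:ℂ) else 0)) * (π m : ℂ)
      * x ^ m.1 * y ^ (m.2 + 1) with hG3def
  have h0G3 : ∀ m : ℕ × ℕ, m.1 = 0 → G3 m = 0 := by
    intro m hm; simp [hG3def, hm]
  have hcomp3 : (fun m : ℕ × ℕ => G3 (m.1 + 1, m.2)) = T3 := by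
    funext m
    simp only [hG3def, hT3def, Nat.succ_ne_zero, if_false]
    ring
  have hG3eq : G3 = fun m => y * F m - y * (F m * (if m.1 = 0 then (1:ℂ) else 0)) := by
    funext m
    simp only [hG3def, hFdef]
    ring
  have hG3s : Summable G3 := by
    rw [hG3eq]
    exact (hF.mul_left y).sub (hFI.mul_left y)
  have hT3s : Summable T3 := by
    rw [← hcomp3]
    exact hG3s.comp_injective (by
      rintro ⟨a1, a2⟩ ⟨b1, b2⟩ h
      simp only [Prod.mk.injEq] at h
      exact Prod.ext (by omega) h.2)
  have hT3 : ∑' m, T3 m = y * (∑' m, F m)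
      - y * (∑' m : ℕ × ℕ, F m * (if m.1 = 0 then (1:ℂ) else 0)) := by
    rw [← hcomp3, shift_fst_tsum G3 h0G3, hG3eq,
      Summable.tsum_sub (hF.mul_left y) (hFI.mul_left y), tsum_mul_left, tsum_mul_left]
  -- T4
  set G4 : ℕ × ℕ → ℂ := fun m => (1 - (if m.1 = 0 then (1:ℂ) else 0)) * (π m : ℂ)
      * x ^ m.1 * y ^ (m.2 + 1) * (if m.2 = 0 then (1:ℂ) else 0) with hG4def
  have h0G4 : ∀ m : ℕ × ℕ, m.1 = 0 → G4 m = 0 := by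
    intro m hm; simp [hG4def, hm]
  have hcomp4 : (fun m : ℕ × ℕ => G4 (m.1 + 1, m.2)) = T4 := by
    funext m
    simp only [hG4def, hT4def, Nat.succ_ne_zero, if_false]
    ring
  have hG4eq : G4 = fun m => y * (F m * (if m.2 = 0 then (1:ℂ) else 0))
      - y * (F m * (if m.1 = 0 then (1:ℂ) else 0) * (if m.2 = 0 then (1:ℂ) else 0)) := by
    funext m
    simp only [hG4def, hFdef]
    ring
  have hG4s : Summable G4 := by
    rw [hG4eq]
    exact (hFJ.mul_left y).sub (hFIJ.mul_left y)
  have hT4s : Summable T4 := by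
    rw [← hcomp4]
    exact hG4s.comp_injective (by
      rintro ⟨a1, a2⟩ ⟨b1, b2⟩ h
      simp only [Prod.mk.injEq] at h
      exact Prod.ext (by omega) h.2)
  have hT4 : ∑' m, T4 m = y * (∑' m : ℕ × ℕ, F m * (if m.2 = 0 then (1:ℂ) else 0))
      - y * (∑' m : ℕ × ℕ, F m * (if m.1 = 0 then (1:ℂ) else 0)
        * (if m.2 = 0 then (1:ℂ) else 0)) := by
    rw [← hcomp4, shift_fst_tsum G4 h0G4, hG4eq,
      Summable.tsum_sub (hFJ.mul_left y) (hFIJ.mul_left y), tsum_mul_left, tsum_mul_left]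
  -- T5
  set G5 : ℕ × ℕ → ℂ := fun m => (1 - (if m.2 = 0 then (1:ℂ) else 0)) * (π m : ℂ)
      * x ^ (m.1 + 1) * y ^ m.2 with hG5def
  have h0G5 : ∀ m : ℕ × ℕ, m.2 = 0 → G5 m = 0 := by
    intro m hm; simp [hG5def, hm]
  have hcomp5 : (fun m : ℕ × ℕ => G5 (m.1, m.2 + 1)) = T5 := by
    funext m
    simp only [hG5def, hT5def, Nat.succ_ne_zero, if_false]
    ring
  have hG5eq : G5 = fun m => x * F m - x * (F m * (if m.2 = 0 then (1:ℂ) else 0)) := by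
    funext m
    simp only [hG5def, hFdef]
    ring
  have hG5s : Summable G5 := by
    rw [hG5eq]
    exact (hF.mul_left x).sub (hFJ.mul_left x)
  have hT5s : Summable T5 := by
    rw [← hcomp5]
    exact hG5s.comp_injective (by
      rintro ⟨a1, a2⟩ ⟨b1, b2⟩ h
      simp only [Prod.mk.injEq] at h
      exact Prod.ext h.1 (by omega))
  have hT5 : ∑' m, T5 m = x * (∑' m, F m)
      - x * (∑' m : ℕ × ℕ, F m * (if m.2 = 0 then (1:ℂ) else 0)) := by
    rw [← hcomp5, shift_snd_tsum G5 h0G5, hG5eq,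
      Summable.tsum_sub (hF.mul_left x) (hFJ.mul_left x), tsum_mul_left, tsum_mul_left]
  -- T6
  set G6 : ℕ × ℕ → ℂ := fun m => (1 - (if m.2 = 0 then (1:ℂ) else 0)) * (π m : ℂ)
      * x ^ (m.1 + 1) * y ^ m.2 * (if m.1 = 0 then (1:ℂ) else 0) with hG6def
  have h0G6 : ∀ m : ℕ × ℕ, m.2 = 0 → G6 m = 0 := by
    intro m hm; simp [hG6def, hm]
  have hcomp6 : (fun m : ℕ × ℕ => G6 (m.1, m.2 + 1)) = T6 := by
    funext m
    simp only [hG6def, hT6def, Nat.succ_ne_zero, if_false]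
    ring
  have hG6eq : G6 = fun m => x * (F m * (if m.1 = 0 then (1:ℂ) else 0))
      - x * (F m * (if m.1 = 0 then (1:ℂ) else 0) * (if m.2 = 0 then (1:ℂ) else 0)) := by
    funext m
    simp only [hG6def, hFdef]
    ring
  have hG6s : Summable G6 := by
    rw [hG6eq]
    exact (hFI.mul_left x).sub (hFIJ.mul_left x)
  have hT6s : Summable T6 := by
    rw [← hcomp6]
    exact hG6s.comp_injective (by
      rintro ⟨a1, a2⟩ ⟨b1, b2⟩ h
      simp only [Prod.mk.injEq] at h
      exact Prod.ext h.1 (by omega))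
  have hT6 : ∑' m, T6 m = x * (∑' m : ℕ × ℕ, F m * (if m.1 = 0 then (1:ℂ) else 0))
      - x * (∑' m : ℕ × ℕ, F m * (if m.1 = 0 then (1:ℂ) else 0)
        * (if m.2 = 0 then (1:ℂ) else 0)) := by
    rw [← hcomp6, shift_snd_tsum G6 h0G6, hG6eq,
      Summable.tsum_sub (hFI.mul_left x) (hFIJ.mul_left x), tsum_mul_left, tsum_mul_left]
  -- termwise balance equation
  have hterm : ∀ m : ℕ × ℕ,
      ((x * y) * (((mu1:ℂ) * c1 + (mu2:ℂ) * c2 + (la1:ℂ) + (la2:ℂ)))) * F m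
        + (((x * y) * ((p1:ℂ) * la1 - (la1:ℂ))) * (F m * (if m.1 = 0 then (1:ℂ) else 0))
        + (((x * y) * ((p2:ℂ) * la2 - (la2:ℂ))) * (F m * (if m.2 = 0 then (1:ℂ) else 0))
        + ((x * y) * (-(p1:ℂ) * la1 - (p2:ℂ) * la2))
            * (F m * (if m.1 = 0 then (1:ℂ) else 0) * (if m.2 = 0 then (1:ℂ) else 0))))
      = ((mu1:ℂ) * c1) * T1 m + (((mu2:ℂ) * c2) * T2 m + ((la1:ℂ) * T3 m
        + (((p2:ℂ) * la2) * T4 m + ((la2:ℂ) * T5 m + ((p1:ℂ) * la1) * T6 m)))) := by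
    rintro ⟨m1, m2⟩
    have hb := hbal m1 m2
    have hb' := congrArg (fun r : ℝ => (r : ℂ)) hb
    push_cast [apply_ite (fun r : ℝ => (r : ℂ))] at hb'
    have e1 : (if 0 < m1 then (1:ℂ) else 0) = 1 - (if m1 = 0 then (1:ℂ) else 0) := by
      rcases Nat.eq_zero_or_pos m1 with h | h
      · simp [h]
      · simp [h, Nat.pos_iff_ne_zero.mp h]
    have e2 : (if 0 < m2 then (1:ℂ) else 0) = 1 - (if m2 = 0 then (1:ℂ) else 0) := by
      rcases Nat.eq_zero_or_pos m2 with h | h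
      · simp [h]
      · simp [h, Nat.pos_iff_ne_zero.mp h]
    rw [e1, e2] at hb'
    simp only [hFdef, hT1def, hT2def, hT3def, hT4def, hT5def, hT6def]
    linear_combination (x ^ (m1 + 1) * y ^ (m2 + 1)) * hb'
  -- sum the balance equations
  have hkey := tsum_congr (L := SummationFilter.unconditional _) hterm
  rw [Summable.tsum_add (hF.mul_left _) ((hFI.mul_left _).add ((hFJ.mul_left _).add
      (hFIJ.mul_left _))),
    Summable.tsum_add (hFI.mul_left _) ((hFJ.mul_left _).add (hFIJ.mul_left _)),
    Summable.tsum_add (hFJ.mul_left _) (hFIJ.mul_left _),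
    Summable.tsum_add (hT1s.mul_left _) ((hT2s.mul_left _).add ((hT3s.mul_left _).add
      ((hT4s.mul_left _).add ((hT5s.mul_left _).add (hT6s.mul_left _))))),
    Summable.tsum_add (hT2s.mul_left _) ((hT3s.mul_left _).add ((hT4s.mul_left _).add
      ((hT5s.mul_left _).add (hT6s.mul_left _)))),
    Summable.tsum_add (hT3s.mul_left _) ((hT4s.mul_left _).add ((hT5s.mul_left _).add
      (hT6s.mul_left _))),
    Summable.tsum_add (hT4s.mul_left _) ((hT5s.mul_left _).add (hT6s.mul_left _)),
    Summable.tsum_add (hT5s.mul_left _) (hT6s.mul_left _),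
    tsum_mul_left, tsum_mul_left, tsum_mul_left, tsum_mul_left, tsum_mul_left,
    tsum_mul_left, tsum_mul_left, tsum_mul_left, tsum_mul_left, tsum_mul_left,
    hT1, hT2, hT3, hT4, hT5, hT6] at hkey
  rw [hgxy, hgx0, hg0y, ← hg00]
  simp only [h1, h2, h3, h4]
  linear_combination hkey
end

section
/- Assume λ₂ ≠ μ₂c₂. Then the quartic polynomial Δ₂ has exactly four real roots x₁ < x₂ < x₃ < x₄, all of which are positive and pairwise distinct, and they satisfy 0 < x₁ < x₂ < 1 < x₃ < x₄. -/
/-- Δ₂(x) = (μ₁c₁x² − (λ₁+λ₂+μ₁c₁+μ₂c₂)x + λ₁)² − 4μ₂c₂λ₂x² -/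
noncomputable def Delta2 (la1 la2 mu1 mu2 c1 c2 : ℝ) (x : ℝ) : ℝ :=
  (mu1 * c1 * x ^ 2 - (la1 + la2 + mu1 * c1 + mu2 * c2) * x + la1) ^ 2
    - 4 * mu2 * c2 * la2 * x ^ 2

/-- Factorization of a real quadratic with nonnegative discriminant. -/
lemma quad_fact (a B C sf : ℝ) (ha : a ≠ 0) (hsf2 : sf ^ 2 = B ^ 2 - 4*a*C) (x : ℝ) :
    a*x^2 - B*x + C = a*(x - (B - sf)/(2*a))*(x - (B + sf)/(2*a)) := by
  field_simp
  linear_combination hsf2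


lemma straddle_one (a p q : ℝ) (ha : 0 < a) (hpq : p < q) (h : a*(1-p)*(1-q) < 0) :
    p < 1 ∧ 1 < q := by
  have h2 : (1-p)*(1-q) < 0 := by
    by_contra h3; push_neg at h3; nlinarith
  constructor
  · by_contra h3; push_neg at h3; nlinarith
  · by_contra h3; push_neg at h3; nlinarith

lemma root_pos (a p q c : ℝ) (ha : 0 < a) (hq : 0 < q) (hc : 0 < c)
    (h : a*(0-p)*(0-q) = c) : 0 < p := by
  by_contra h3; push_neg at h3
  nlinarith [mul_nonneg ha.le (show (0:ℝ) ≤ 0 - p by linarith)]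

lemma lt_root_left (a p q y : ℝ) (ha : 0 < a) (hy : y < q) (h : a*(y-p)*(y-q) < 0) :
    p < y := by
  by_contra h3; push_neg at h3
  nlinarith [mul_nonneg (mul_nonneg ha.le (show (0:ℝ) ≤ p - y by linarith))
    (show (0:ℝ) ≤ q - y by linarith)]

lemma lt_root_right (a p q y : ℝ) (ha : 0 < a) (hy : p < y) (h : a*(y-p)*(y-q) < 0) :
    y < q := by
  by_contra h3; push_neg at h3
  nlinarith [mul_nonneg (mul_nonneg ha.le (show (0:ℝ) ≤ y - p by linarith))
    (show (0:ℝ) ≤ y - q by linarith)]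

set_option maxHeartbeats 1600000 in
theorem stmt9 (la1 la2 mu1 mu2 c1 c2 : ℝ)
    (hla1 : 0 < la1) (hla2 : 0 < la2) (hmu1 : 0 < mu1) (hmu2 : 0 < mu2)
    (hc1 : 0 < c1) (hc2 : 0 < c2) (hne : la2 ≠ mu2 * c2) :
    ∃ x1 x2 x3 x4 : ℝ,
      0 < x1 ∧ x1 < x2 ∧ x2 < 1 ∧ 1 < x3 ∧ x3 < x4 ∧
      ∀ x : ℝ, Delta2 la1 la2 mu1 mu2 c1 c2 x = 0 ↔ (x = x1 ∨ x = x2 ∨ x = x3 ∨ x = x4) := by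
  have ha : (0:ℝ) < mu1 * c1 := by positivity
  set a := mu1 * c1 with ha_def
  have hane : a ≠ 0 := ne_of_gt ha
  set S := la1 + la2 + a + mu2 * c2 with hS_def
  -- square roots
  have hu2 : Real.sqrt la2 ^ 2 = la2 := Real.sq_sqrt hla2.le
  have hv2 : Real.sqrt (mu2*c2) ^ 2 = mu2*c2 := Real.sq_sqrt (by positivity)
  set u := Real.sqrt la2 with hu_def
  set v := Real.sqrt (mu2*c2) with hv_def
  have hu : 0 < u := Real.sqrt_pos.2 hla2
  have hv : 0 < v := Real.sqrt_pos.2 (by positivity)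
  have huv : u ≠ v := by
    intro h
    apply hne
    rw [← hu2, ← hv2, h]
  set r := v * u with hr_def
  have hr : 0 < r := by positivity
  have hr2 : r ^ 2 = mu2 * c2 * la2 := by
    rw [hr_def]; linear_combination u^2 * hv2 + (mu2*c2) * hu2
  -- values at 1
  have hf1 : a - (S + 2*r) + la1 < 0 := by
    rw [hS_def]; linarith [hr, mul_pos hmu2 hc2]
  have hg1 : a - (S - 2*r) + la1 < 0 := by
    have h : a - (S - 2*r) + la1 = -((u - v)^2) := by
      rw [hS_def, hr_def]; linear_combination hu2 + hv2
    rw [h]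
    have h2 : (0:ℝ) < (u - v)^2 := by
      have hne0 : u - v ≠ 0 := sub_ne_zero.2 huv
      positivity
    linarith
  -- discriminants
  have hDf : 0 < (S + 2*r)^2 - 4*a*la1 := by
    nlinarith [sq_nonneg (S + 2*r - 2*a), ha, hf1]
  have hDg : 0 < (S - 2*r)^2 - 4*a*la1 := by
    nlinarith [sq_nonneg (S - 2*r - 2*a), ha, hg1]
  set sf := Real.sqrt ((S + 2*r)^2 - 4*a*la1) with hsf_def
  set sg := Real.sqrt ((S - 2*r)^2 - 4*a*la1) with hsg_def
  have hsf : 0 < sf := Real.sqrt_pos.2 hDf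
  have hsg : 0 < sg := Real.sqrt_pos.2 hDg
  have hsf2 : sf ^ 2 = (S + 2*r)^2 - 4*a*la1 := Real.sq_sqrt hDf.le
  have hsg2 : sg ^ 2 = (S - 2*r)^2 - 4*a*la1 := Real.sq_sqrt hDg.le
  set x1 := (S + 2*r - sf) / (2*a) with hx1_def
  set x4 := (S + 2*r + sf) / (2*a) with hx4_def
  set x2 := (S - 2*r - sg) / (2*a) with hx2_def
  set x3 := (S - 2*r + sg) / (2*a) with hx3_def
  clear_value a S u v r sf sg x1 x4 x2 x3
  -- factorizations
  have hfactf : ∀ x : ℝ, a*x^2 - (S + 2*r)*x + la1 = a*(x - x1)*(x - x4) := by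
    intro x
    rw [hx1_def, hx4_def]
    exact quad_fact a (S + 2*r) la1 sf hane hsf2 x
  have hfactg : ∀ x : ℝ, a*x^2 - (S - 2*r)*x + la1 = a*(x - x2)*(x - x3) := by
    intro x
    rw [hx2_def, hx3_def]
    exact quad_fact a (S - 2*r) la1 sg hane hsg2 x
  have hDelta : ∀ x : ℝ, Delta2 la1 la2 mu1 mu2 c1 c2 x =
      (a*x^2 - (S + 2*r)*x + la1) * (a*x^2 - (S - 2*r)*x + la1) := by
    intro x
    rw [Delta2, hS_def, ← ha_def]
    linear_combination (4*x^2) * hr2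
  -- orderings
  have hx14 : x1 < x4 := by
    rw [hx1_def, hx4_def]
    exact div_lt_div_of_pos_right (by linarith) (by linarith)
  have hx23 : x2 < x3 := by
    rw [hx2_def, hx3_def]
    exact div_lt_div_of_pos_right (by linarith) (by linarith)
  have hf1' : a*(1 - x1)*(1 - x4) < 0 := by rw [← hfactf 1]; linarith [hf1]
  have hg1' : a*(1 - x2)*(1 - x3) < 0 := by rw [← hfactg 1]; linarith [hg1]
  obtain ⟨hx1lt1, hx4gt1⟩ := straddle_one a x1 x4 ha hx14 hf1'
  obtain ⟨hx2lt1, hx3gt1⟩ := straddle_one a x2 x3 ha hx23 hg1'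
  -- positivity of roots
  have hf0 : a*(0 - x1)*(0 - x4) = la1 := by rw [← hfactf 0]; ring
  have hg0 : a*(0 - x2)*(0 - x3) = la1 := by rw [← hfactg 0]; ring
  have hx1pos : 0 < x1 := root_pos a x1 x4 la1 ha (by linarith) hla1 hf0
  have hx2pos : 0 < x2 := root_pos a x2 x3 la1 ha (by linarith) hla1 hg0
  -- x1 < x2 and x3 < x4: evaluate f at the roots of g
  have hgx2 : a*x2^2 - (S - 2*r)*x2 + la1 = 0 := by rw [hfactg x2]; ring
  have hgx3 : a*x3^2 - (S - 2*r)*x3 + la1 = 0 := by rw [hfactg x3]; ring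
  have hfx2 : a*(x2 - x1)*(x2 - x4) = -(4*r*x2) := by
    rw [← hfactf x2]; linarith [hgx2]
  have hfx3 : a*(x3 - x1)*(x3 - x4) = -(4*r*x3) := by
    rw [← hfactf x3]; linarith [hgx3]
  have hx12 : x1 < x2 :=
    lt_root_left a x1 x4 x2 ha (by linarith) (by rw [hfx2]; have := mul_pos hr hx2pos; linarith)
  have hx34 : x3 < x4 :=
    lt_root_right a x1 x4 x3 ha (by linarith) (by rw [hfx3]; have := mul_pos hr (show (0:ℝ) < x3 by linarith); linarith)
  refine ⟨x1, x2, x3, x4, hx1pos, hx12, hx2lt1, hx3gt1, hx34, ?_⟩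
  intro x
  rw [hDelta x, hfactf x, hfactg x]
  constructor
  · intro h
    rcases mul_eq_zero.1 h with h1 | h1
    · rcases mul_eq_zero.1 h1 with h2 | h2
      · rcases mul_eq_zero.1 h2 with h3 | h3
        · exact absurd h3 hane
        · exact Or.inl (by linarith [sub_eq_zero.1 h3])
      · exact Or.inr (Or.inr (Or.inr (by linarith [sub_eq_zero.1 h2])))
    · rcases mul_eq_zero.1 h1 with h2 | h2
      · rcases mul_eq_zero.1 h2 with h3 | h3
        · exact absurd h3 hane
        · exact Or.inr (Or.inl (by linarith [sub_eq_zero.1 h3]))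
      · exact Or.inr (Or.inr (Or.inl (by linarith [sub_eq_zero.1 h2])))
  · rintro (rfl | rfl | rfl | rfl) <;> ring
end

section
/- Let x, y be complex numbers with y ≠ 0, h₁(x,y) = 0 and y·conj(y) = λ₂/(μ₂c₂). Then h₃(x, conj(y))·h₂(x,y) = −(λ₁λ₂(x−1)/(μ₂c₂·y))·(λ₂(1−p₁p₂)·x + y·R_Y(x)). -/
/-- R_Y(x) = p₁μ₁c₁(1−p₂)x² + (p₁p₂(μ₁c₁+μ₂c₂) − (1−p₂)(λ₂+λ₁p₁))x − p₂(λ₂+λ₁p₁),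
as a polynomial over ℂ. -/
noncomputable def RYc (la1 la2 mu1 mu2 c1 c2 p1 p2 : ℝ) (x : ℂ) : ℂ :=
  (p1 : ℂ) * mu1 * c1 * (1 - (p2 : ℂ)) * x ^ 2
    + ((p1 : ℂ) * p2 * ((mu1 : ℂ) * c1 + (mu2 : ℂ) * c2)
        - (1 - (p2 : ℂ)) * ((la2 : ℂ) + la1 * p1)) * x
    - (p2 : ℂ) * ((la2 : ℂ) + la1 * p1)

theorem stmt11 (la1 la2 mu1 mu2 c1 c2 p1 p2 : ℝ)
    (hla1 : 0 < la1) (hla2 : 0 < la2) (hmu1 : 0 < mu1) (hmu2 : 0 < mu2)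
    (hc1 : 0 < c1) (hc2 : 0 < c2)
    (hp1 : 0 ≤ p1) (hp1' : p1 ≤ 1) (hp2 : 0 ≤ p2) (hp2' : p2 ≤ 1)
    (x y : ℂ) (hy : y ≠ 0)
    (hker : h1 la1 la2 mu1 mu2 c1 c2 x y = 0)
    (hmod : y * (starRingEnd ℂ) y = (la2 : ℂ) / ((mu2 : ℂ) * c2)) :
    h3 la1 p1 x ((starRingEnd ℂ) y) * h2 la2 p2 x y
      = -((la1 : ℂ) * la2 * (x - 1) / ((mu2 : ℂ) * c2 * y))
          * ((la2 : ℂ) * (1 - (p1 : ℂ) * p2) * x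
              + y * RYc la1 la2 mu1 mu2 c1 c2 p1 p2 x) := by
  have hn : ((mu2:ℂ) * c2) ≠ 0 := by
    simp [Complex.ofReal_ne_zero, hmu2.ne', hc2.ne']
  have hcy : (starRingEnd ℂ) y = (la2 : ℂ) / ((mu2 : ℂ) * c2 * y) := by
    field_simp at hmod ⊢
    linear_combination hmod
  rw [hcy]
  simp only [h1, h2, h3, RYc] at hker ⊢
  have hm : (mu2:ℂ) ≠ 0 := by exact_mod_cast hmu2.ne'
  have hc : (c2:ℂ) ≠ 0 := by exact_mod_cast hc2.ne'
  field_simp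
  linear_combination ((la1:ℂ) * la2 * p1 * ((p2 - 1) * x - p2)) * hker
end

section
/- Assume p₁p₂ < 1. For all complex numbers x, y with h₂(x,y) ≠ 0, Im(h₄(x,y)/h₂(x,y)) = −(p₂(λ₂+λ₁p₁)/(λ₁(1−p₁p₂)))·Re(i·h₃(x,y)/h₂(x,y)). -/
theorem stmt12 (la1 la2 mu1 mu2 c1 c2 p1 p2 : ℝ)
    (hla1 : 0 < la1) (hla2 : 0 < la2) (hmu1 : 0 < mu1) (hmu2 : 0 < mu2)
    (hc1 : 0 < c1) (hc2 : 0 < c2)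
    (hp1 : 0 ≤ p1) (hp1' : p1 ≤ 1) (hp2 : 0 ≤ p2) (hp2' : p2 ≤ 1)
    (hp : p1 * p2 < 1) :
    ∀ x y : ℂ, h2 la2 p2 x y ≠ 0 →
      (h4 la1 la2 p1 p2 x y / h2 la2 p2 x y).im
        = -(p2 * (la2 + la1 * p1) / (la1 * (1 - p1 * p2)))
            * (Complex.I * h3 la1 p1 x y / h2 la2 p2 x y).re := by
  intro x y hne
  have hd : (1 : ℝ) - p1 * p2 ≠ 0 := by nlinarith
  have hla1' : la1 ≠ 0 := ne_of_gt hla1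
  have hla2' : la2 ≠ 0 := ne_of_gt hla2
  set a : ℝ := p1 * (la1 + p2 * la2) / (la2 * (1 - p1 * p2)) with ha
  set b : ℝ := p2 * (la1 * p1 + la2) / (la1 * (1 - p1 * p2)) with hb
  have hdc : ((1 : ℂ) - p1 * p2) ≠ 0 := by
    exact_mod_cast (by exact_mod_cast hd : ((1 : ℝ) - p1 * p2 : ℂ) ≠ 0)
  have key : h4 la1 la2 p1 p2 x y = (a : ℂ) * h2 la2 p2 x y + (b : ℂ) * h3 la1 p1 x y := by
    simp only [h2, h3, h4, ha, hb]
    push_cast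
    have h1 : (la1 : ℂ) ≠ 0 := by exact_mod_cast hla1'
    have h2' : (la2 : ℂ) ≠ 0 := by exact_mod_cast hla2'
    have h3' : ((1 : ℂ) - (p1 : ℂ) * p2) ≠ 0 := by
      intro h; apply hd; exact_mod_cast h
    field_simp
    ring
  set z := h3 la1 p1 x y / h2 la2 p2 x y with hz
  have hdiv : h4 la1 la2 p1 p2 x y / h2 la2 p2 x y = (a : ℂ) + (b : ℂ) * z := by
    rw [key, hz, add_div, mul_div_assoc, mul_div_assoc, div_self hne, mul_one]
  have hI : Complex.I * h3 la1 p1 x y / h2 la2 p2 x y = Complex.I * z := by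
    rw [hz, mul_div_assoc]
  rw [hdiv, hI]
  simp only [Complex.add_im, Complex.ofReal_im, Complex.mul_im, Complex.ofReal_re,
    Complex.mul_re, Complex.I_re, Complex.I_im]
  rw [hb]
  ring
end

section
/- Let l₁, l₂ be positive reals with λ₁ < μ₁l₁ and λ₂ < μ₂l₂. Then there exists no invariant distribution of the random walk (m̄_l(t)), i.e., no probability distribution π on ℕ×ℕ satisfies the balance equations. -/
/-- Cut identity: total flow across vertical cuts in a stationary distribution. -/
lemma cut_identity (la1 la2 mu1 mu2 p1 p2 l1 l2 : ℝ) (π : ℕ × ℕ → ℝ)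
    (hpos : ∀ m, 0 ≤ π m) (hsum : ∑' m : ℕ × ℕ, π m = 1)
    (hbal : ∀ m1 m2 : ℕ,
      π (m1, m2) * (mu1 * l1 + mu2 * l2
          + (la1 + p2 * la2 * (if m2 = 0 then 1 else 0)) * (if 0 < m1 then 1 else 0)
          + (la2 + p1 * la1 * (if m1 = 0 then 1 else 0)) * (if 0 < m2 then 1 else 0))
      = mu1 * l1 * π (m1 - 1, m2) * (if 0 < m1 then 1 else 0)
        + mu2 * l2 * π (m1, m2 - 1) * (if 0 < m2 then 1 else 0)
        + (la1 + p2 * la2 * (if m2 = 0 then 1 else 0)) * π (m1 + 1, m2)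
        + (la2 + p1 * la1 * (if m1 = 0 then 1 else 0)) * π (m1, m2 + 1)) :
    mu1 * l1 = la1 * (1 - ∑' m2, π (0, m2))
      + p2 * la2 * ((∑' m1, π (m1, 0)) - π (0, 0)) := by
  have hS : Summable π := by
    by_contra h
    rw [tsum_eq_zero_of_not_summable h] at hsum
    norm_num at hsum
  have hrow : ∀ m1, Summable fun m2 => π (m1, m2) := fun m1 => hS.prod_factor m1
  set A : ℕ → ℝ := fun m1 => ∑' m2, π (m1, m2) with hA
  have hAs : Summable A := ((summable_prod_of_nonneg hpos).mp hS).2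
  have hA1 : ∑' m1, A m1 = 1 := by rw [← hsum]; exact (Summable.tsum_prod' hS hrow).symm
  have hBs : Summable fun m1 => π (m1, 0) := by
    have hinj : Function.Injective (fun m1 : ℕ => ((m1, 0) : ℕ × ℕ)) := by
      intro a b hab; simpa using hab
    exact hS.comp_injective hinj
  have colEq : ∀ m1 : ℕ,
      (mu1 * l1 + la1 * (if 0 < m1 then (1:ℝ) else 0)) * A m1
        + p2 * la2 * (if 0 < m1 then (1:ℝ) else 0) * π (m1, 0)
      = mu1 * l1 * (if 0 < m1 then (1:ℝ) else 0) * A (m1 - 1)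
        + la1 * A (m1 + 1) + p2 * la2 * π (m1 + 1, 0) := by
    intro m1
    set i1 : ℝ := (if 0 < m1 then (1:ℝ) else 0) with hi1
    set e1 : ℝ := (if m1 = 0 then (1:ℝ) else 0) with he1
    set E : ℝ := la2 + p1 * la1 * e1 with hE
    have hLpt : ∀ m2 : ℕ,
        π (m1, m2) * (mu1 * l1 + mu2 * l2
            + (la1 + p2 * la2 * (if m2 = 0 then 1 else 0)) * i1
            + E * (if 0 < m2 then 1 else 0))
        = (mu1 * l1 + mu2 * l2 + la1 * i1 + E) * π (m1, m2)
          + (if m2 = 0 then (p2 * la2 * i1 - E) * π (m1, 0) else 0) := by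
      intro m2
      cases m2 with
      | zero => simp; ring
      | succ n => simp; ring
    have sL1 : Summable fun m2 => (mu1 * l1 + mu2 * l2 + la1 * i1 + E) * π (m1, m2) :=
      (hrow m1).mul_left _
    have sL2 : Summable fun m2 : ℕ =>
        (if m2 = 0 then (p2 * la2 * i1 - E) * π (m1, 0) else 0) := by
      apply summable_of_ne_finset_zero (s := {0})
      intro b hb
      simp at hb
      simp [hb]
    have hL : ∑' m2, π (m1, m2) * (mu1 * l1 + mu2 * l2
            + (la1 + p2 * la2 * (if m2 = 0 then 1 else 0)) * i1
            + E * (if 0 < m2 then 1 else 0))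
        = (mu1 * l1 + mu2 * l2 + la1 * i1 + E) * A m1
          + (p2 * la2 * i1 - E) * π (m1, 0) := by
      have hiteL : ∑' m2 : ℕ, (if m2 = 0 then (p2 * la2 * i1 - E) * π (m1, 0) else 0)
          = (p2 * la2 * i1 - E) * π (m1, 0) := by
        rw [tsum_eq_single 0 (by intro b hb; simp [hb])]
        simp
      rw [tsum_congr hLpt, Summable.tsum_add sL1 sL2, tsum_mul_left, hiteL]
    set u : ℕ → ℝ := fun m2 => if m2 = 0 then 0 else mu2 * l2 * π (m1, m2 - 1) with hu_def
    have hu_succ : ∀ n : ℕ, u (n + 1) = mu2 * l2 * π (m1, n) := by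
      intro n; simp [hu_def]
    have hus : Summable u := by
      apply (summable_nat_add_iff 1).mp
      apply Summable.congr ((hrow m1).mul_left (mu2 * l2))
      intro n
      exact (hu_succ n).symm
    have hut : ∑' m2, u m2 = mu2 * l2 * A m1 := by
      rw [Summable.tsum_eq_zero_add hus, tsum_congr hu_succ, tsum_mul_left]
      simp [hu_def, hA]
    have hshift : Summable fun m2 => π (m1, m2 + 1) := (summable_nat_add_iff 1).mpr (hrow m1)
    have hshift_sum : ∑' m2, π (m1, m2 + 1) = A m1 - π (m1, 0) := by
      have h0 := Summable.tsum_eq_zero_add (hrow m1)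
      have : A m1 = π (m1, 0) + ∑' m2, π (m1, m2 + 1) := h0
      linarith
    have hRpt : ∀ m2 : ℕ,
        mu1 * l1 * π (m1 - 1, m2) * i1
          + mu2 * l2 * π (m1, m2 - 1) * (if 0 < m2 then 1 else 0)
          + (la1 + p2 * la2 * (if m2 = 0 then 1 else 0)) * π (m1 + 1, m2)
          + E * π (m1, m2 + 1)
        = (mu1 * l1 * i1) * π (m1 - 1, m2) + u m2 + la1 * π (m1 + 1, m2)
          + (if m2 = 0 then p2 * la2 * π (m1 + 1, 0) else 0)
          + E * π (m1, m2 + 1) := by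
      intro m2
      cases m2 with
      | zero => simp [hu_def]; ring
      | succ n => simp [hu_def]; ring
    have s1 : Summable fun m2 => (mu1 * l1 * i1) * π (m1 - 1, m2) := (hrow (m1 - 1)).mul_left _
    have s3 : Summable fun m2 => la1 * π (m1 + 1, m2) := (hrow (m1 + 1)).mul_left _
    have s4 : Summable fun m2 : ℕ => (if m2 = 0 then p2 * la2 * π (m1 + 1, 0) else 0) := by
      apply summable_of_ne_finset_zero (s := {0})
      intro b hb
      simp at hb
      simp [hb]
    have s5 : Summable fun m2 => E * π (m1, m2 + 1) := hshift.mul_left _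
    have hR : ∑' m2, (mu1 * l1 * π (m1 - 1, m2) * i1
          + mu2 * l2 * π (m1, m2 - 1) * (if 0 < m2 then 1 else 0)
          + (la1 + p2 * la2 * (if m2 = 0 then 1 else 0)) * π (m1 + 1, m2)
          + E * π (m1, m2 + 1))
        = (mu1 * l1 * i1) * A (m1 - 1) + mu2 * l2 * A m1 + la1 * A (m1 + 1)
          + p2 * la2 * π (m1 + 1, 0) + E * (A m1 - π (m1, 0)) := by
      have hiteR : ∑' m2 : ℕ, (if m2 = 0 then p2 * la2 * π (m1 + 1, 0) else 0)
          = p2 * la2 * π (m1 + 1, 0) := by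
        rw [tsum_eq_single 0 (by intro b hb; simp [hb])]
        simp
      rw [tsum_congr hRpt, Summable.tsum_add (((s1.add hus).add s3).add s4) s5,
        Summable.tsum_add ((s1.add hus).add s3) s4, Summable.tsum_add (s1.add hus) s3, Summable.tsum_add s1 hus,
        tsum_mul_left, tsum_mul_left, tsum_mul_left, hut, hshift_sum, hiteR]
    have hEq := tsum_congr (L := SummationFilter.unconditional ℕ) (fun m2 => hbal m1 m2)
    rw [← hi1, ← he1, ← hE] at hEq
    have hv := hL.symm.trans (hEq.trans hR)
    linear_combination hv
  have keyrec : ∀ n : ℕ, mu1 * l1 * A n = la1 * A (n + 1) + p2 * la2 * π (n + 1, 0) := by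
    intro n
    induction n with
    | zero =>
      have h := colEq 0
      norm_num at h
      linear_combination h
    | succ n ih =>
      have h := colEq (n + 1)
      rw [if_pos (Nat.succ_pos n)] at h
      simp only [Nat.add_sub_cancel] at h
      linear_combination h + ih
  have hAshift : Summable fun n => A (n + 1) := (summable_nat_add_iff 1).mpr hAs
  have hBshift : Summable fun n => π (n + 1, 0) := (summable_nat_add_iff 1).mpr hBs
  have hAshift_sum : ∑' n, A (n + 1) = 1 - A 0 := by
    have h0 := Summable.tsum_eq_zero_add hAs
    rw [hA1] at h0
    linarith
  have hBshift_sum : ∑' n, π (n + 1, 0) = (∑' m1, π (m1, 0)) - π (0, 0) := by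
    have h0 := Summable.tsum_eq_zero_add hBs
    linarith
  have hfinal := tsum_congr (L := SummationFilter.unconditional ℕ) keyrec
  rw [tsum_mul_left, hA1, mul_one,
    Summable.tsum_add (hAshift.mul_left la1) (hBshift.mul_left (p2 * la2)),
    tsum_mul_left, tsum_mul_left, hAshift_sum, hBshift_sum] at hfinal
  simpa [hA] using hfinal

theorem stmt19 (la1 la2 mu1 mu2 p1 p2 l1 l2 : ℝ)
    (hla1 : 0 < la1) (hla2 : 0 < la2) (hmu1 : 0 < mu1) (hmu2 : 0 < mu2)
    (hp1 : 0 ≤ p1) (hp1' : p1 ≤ 1) (hp2 : 0 ≤ p2) (hp2' : p2 ≤ 1)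
    (hl1 : 0 < l1) (hl2 : 0 < l2)
    (h1 : la1 < mu1 * l1) (h2 : la2 < mu2 * l2) :
    ¬ ∃ π : ℕ × ℕ → ℝ, IsInvariantDist la1 la2 mu1 mu2 l1 l2 p1 p2 π := by
  rintro ⟨π, hpos, hsum, hbal⟩
  have hS : Summable π := by
    by_contra h
    rw [tsum_eq_zero_of_not_summable h] at hsum
    norm_num at hsum
  have key1 := cut_identity la1 la2 mu1 mu2 p1 p2 l1 l2 π hpos hsum hbal
  have key2 : mu2 * l2 = la2 * (1 - ∑' m2, π (m2, 0))
      + p1 * la1 * ((∑' m1, π (0, m1)) - π (0, 0)) := by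
    have h := cut_identity la2 la1 mu2 mu1 p2 p1 l2 l1 (fun m => π (m.2, m.1))
      (fun m => hpos _)
      (by rw [← hsum]; exact (Equiv.prodComm ℕ ℕ).tsum_eq π)
      (fun m1 m2 => by dsimp only; linear_combination hbal m2 m1)
    exact h
  have hrow0 : Summable fun m2 => π (0, m2) := hS.prod_factor 0
  have hcol0 : Summable fun m1 => π (m1, 0) := by
    have hinj : Function.Injective (fun m1 : ℕ => ((m1, 0) : ℕ × ℕ)) := by
      intro a b hab; simpa using hab
    exact hS.comp_injective hinj
  set A0 : ℝ := ∑' m2, π (0, m2) with hA0def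
  set B0 : ℝ := ∑' m1, π (m1, 0) with hB0def
  have hπ00 : 0 ≤ π (0, 0) := hpos _
  have hA0pos : 0 ≤ A0 := tsum_nonneg fun _ => hpos _
  have hB0pos : 0 ≤ B0 := tsum_nonneg fun _ => hpos _
  have hle1 : π (0, 0) ≤ B0 := Summable.le_tsum hcol0 0 fun _ _ => hpos _
  have hle2 : π (0, 0) ≤ A0 := Summable.le_tsum hrow0 0 fun _ _ => hpos _
  have b1 : p2 * la2 * (B0 - π (0, 0)) ≤ la2 * B0 := by
    nlinarith [mul_nonneg (mul_nonneg (sub_nonneg.mpr hp2') hla2.le) hB0pos,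
      mul_nonneg (mul_nonneg hp2 hla2.le) hπ00]
  have b2 : p1 * la1 * (A0 - π (0, 0)) ≤ la1 * A0 := by
    nlinarith [mul_nonneg (mul_nonneg (sub_nonneg.mpr hp1') hla1.le) hA0pos,
      mul_nonneg (mul_nonneg hp1 hla1.le) hπ00]
  have e1 : la1 * (1 - A0) = la1 - la1 * A0 := by ring
  have e2 : la2 * (1 - B0) = la2 - la2 * B0 := by ring
  linarith
end
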